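/- Let p : ℕ → ℝ be a sequence such that for all sufficiently large n, (log n)²/n^{1/2} < p(n) ≤ 1 − 1/log n. For n ∈ ℕ define ε(n) = 2·log( (log n)² / p(n) ) / log n, q(n) = 1 − p(n), ρ(n) = p(n)² + q(n)², and k(n) = 2·(1 − ε(n))·log n / log(1/ρ(n)). Then (k(n) + 1)·log n − (1/64)·p(n)·n^{ε(n)} → −∞ as n → ∞. -/

import Mathlib

open Filter

set_option maxHeartbeats 1000000 in
theorem union_bound_exponent_tendsto_neg_infty
    (p ε ρ k : ℕ → ℝ)
    (hp : ∀ᶠ n : ℕ in atTop,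
      (Real.log n) ^ 2 / (n : ℝ) ^ ((1 : ℝ) / 2) < p n ∧ p n ≤ 1 - 1 / Real.log n)
    (hε : ∀ n, ε n = 2 * Real.log ((Real.log n) ^ 2 / p n) / Real.log n)
    (hρ : ∀ n, ρ n = (p n) ^ 2 + (1 - p n) ^ 2)
    (hk : ∀ n, k n = 2 * (1 - ε n) * Real.log n / Real.log (1 / ρ n)) :
    Tendsto (fun n =>
      (k n + 1) * Real.log n - (1 / 64) * p n * Real.exp (ε n * Real.log n))
      atTop atBot := by
  have hlog : Tendsto (fun n : ℕ => Real.log n) atTop atTop :=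
    Real.tendsto_log_atTop.comp tendsto_natCast_atTop_atTop
  have hbound : ∀ᶠ n : ℕ in atTop,
      (k n + 1) * Real.log n - (1 / 64) * p n * Real.exp (ε n * Real.log n)
        ≤ -Real.log n := by
    filter_upwards [hp, hlog.eventually_ge_atTop 256, eventually_ge_atTop 1]
      with n hpn hL hn1
    obtain ⟨hp1, hp2⟩ := hpn
    set L := Real.log n with hLdef
    have hL0 : (0:ℝ) < L := by linarith
    have hn0 : (0:ℝ) < (n:ℝ) := by exact_mod_cast hn1
    have hs0 : (0:ℝ) < (n:ℝ) ^ ((1:ℝ)/2) := Real.rpow_pos_of_pos hn0 _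
    have hp0 : 0 < p n := lt_trans (div_pos (by positivity) hs0) hp1
    have hq : 1 / L ≤ 1 - p n := by linarith
    have hq0 : 0 < 1 - p n := lt_of_lt_of_le (by positivity) hq
    have hple1 : p n ≤ 1 := by linarith
    -- the exponential term
    have hexp : Real.exp (ε n * L) = (L ^ 2 / p n) ^ 2 := by
      have h1 : ε n * L = Real.log ((L ^ 2 / p n) ^ 2) := by
        rw [hε n, Real.log_pow]
        push_cast
        field_simp
        rw [← hLdef]
        field_simp
      rw [h1, Real.exp_log (by positivity)]
    have hterm : (1/64) * p n * Real.exp (ε n * L) = L ^ 4 / (64 * p n) := by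
      rw [hexp]; field_simp
    -- rho facts
    have hρpos : 0 < ρ n := by rw [hρ n]; positivity
    have hDlb : 2 * p n * (1 - p n) ≤ Real.log (1 / ρ n) := by
      have h1 := Real.log_le_sub_one_of_pos hρpos
      rw [one_div, Real.log_inv]
      rw [hρ n] at h1 ⊢
      nlinarith
    have hDlb2 : 2 * p n / L ≤ Real.log (1 / ρ n) := by
      refine le_trans ?_ hDlb
      rw [div_le_iff₀ hL0]
      have h := mul_le_mul_of_nonneg_left hq (by positivity : (0:ℝ) ≤ 2 * p n * L)
      have h2 : 2 * p n * L * (1 / L) = 2 * p n := by field_simp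
      nlinarith
    have hDpos : 0 < Real.log (1 / ρ n) := lt_of_lt_of_le (by positivity) hDlb2
    -- bounds on A = L - 2 log(L^2/p)
    set A := L - 2 * Real.log (L ^ 2 / p n) with hA
    have hA_le : A ≤ L := by
      have h0 : 0 ≤ Real.log (L ^ 2 / p n) := by
        apply Real.log_nonneg
        rw [le_div_iff₀ hp0]
        nlinarith
      rw [hA]; linarith
    have hA0 : 0 ≤ A := by
      have h1 : Real.log (L ^ 2 / (n:ℝ) ^ ((1:ℝ)/2)) ≤ Real.log (p n) :=
        Real.log_le_log (by positivity) (le_of_lt hp1)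
      have h2 : Real.log (L ^ 2 / (n:ℝ) ^ ((1:ℝ)/2))
          = Real.log (L ^ 2) - (1/2) * L := by
        rw [Real.log_div (by positivity) (ne_of_gt hs0), Real.log_rpow hn0]
      have h3 : Real.log (L ^ 2 / p n) = Real.log (L ^ 2) - Real.log (p n) :=
        Real.log_div (by positivity) (ne_of_gt hp0)
      rw [hA, h3]
      rw [h2] at h1
      linarith
    -- bound on k n * L
    have hkform : k n * L = 2 * A * L / Real.log (1 / ρ n) := by
      rw [hk n, hε n, hA]
      field_simp
      rw [← hLdef]
      field_simp
    have hkL : k n * L ≤ L ^ 3 / p n := by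
      rw [hkform]
      calc 2 * A * L / Real.log (1 / ρ n)
          ≤ (2 * L * L) / (2 * p n / L) :=
            div_le_div₀ (by positivity) (by nlinarith) (by positivity) hDlb2
        _ = L ^ 3 / p n := by field_simp
    have hfin : L ^ 3 / p n + 2 * L ≤ L ^ 4 / (64 * p n) := by
      have h1 : L ^ 3 / p n + 2 * L = (L ^ 3 + 2 * L * p n) / p n := by
        field_simp
      rw [h1, div_le_div_iff₀ hp0 (by positivity)]
      have key : 64 * L ^ 3 + 128 * L * p n ≤ L ^ 4 := by
        nlinarith [mul_le_mul_of_nonneg_right hL (by positivity : (0:ℝ) ≤ L ^ 3),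
          mul_le_mul_of_nonneg_right hL (by positivity : (0:ℝ) ≤ L)]
      nlinarith [mul_le_mul_of_nonneg_right key (le_of_lt hp0)]
    calc (k n + 1) * L - (1/64) * p n * Real.exp (ε n * L)
        = k n * L + L - L ^ 4 / (64 * p n) := by rw [hterm]; ring
      _ ≤ L ^ 3 / p n + L - L ^ 4 / (64 * p n) := by linarith
      _ ≤ -L := by linarith
  exact tendsto_atBot_mono' atTop hbound (tendsto_neg_atTop_atBot.comp hlog)
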